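/- Let σ be a nonconstant inversion sequence of size n avoiding 010 and 102 that does not contain the value 1, with z zeros and s active sites. Then n ≥ 3, 2 ≤ z ≤ n−1, and 2 ≤ s ≤ n−z+1; in particular positions z+1 and n+1 are always active sites. -/

import Mathlib

def IsInvL (l : List ℕ) : Prop := ∀ i (h : i < l.length), l.get ⟨i, h⟩ ≤ i

def C010 (l : List ℕ) : Prop :=
  ∃ i j k, i < j ∧ j < k ∧ k < l.length ∧
    l.getD i 0 = l.getD k 0 ∧ l.getD k 0 < l.getD j 0

def C102 (l : List ℕ) : Prop :=
  ∃ i j k, i < j ∧ j < k ∧ k < l.length ∧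
    l.getD j 0 < l.getD i 0 ∧ l.getD i 0 < l.getD k 0

/-- Position `i ∈ [2, n+1]` (1-indexed) is an active site: inserting the value 1
at that position (i.e. at 0-indexed position `i - 1`) yields a `{010,102}`-avoiding
inversion sequence. -/
def IsSite (l : List ℕ) (i : ℕ) : Prop :=
  IsInvL (l.insertIdx (i - 1) 1) ∧ ¬ C010 (l.insertIdx (i - 1) 1) ∧
    ¬ C102 (l.insertIdx (i - 1) 1)

/-! ### Auxiliary lemmas -/

lemma getD_mem' {l : List ℕ} {k : ℕ} (h : k < l.length) : l.getD k 0 ∈ l := by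
  rw [List.getD_eq_getElem l 0 h]; exact List.getElem_mem h

lemma getD_insertIdx_one (l : List ℕ) (p : ℕ) (hp : p ≤ l.length) (a : ℕ)
    (ha : a < l.length + 1) :
    (l.insertIdx p 1).getD a 0 =
      if a < p then l.getD a 0 else if a = p then 1 else l.getD (a - 1) 0 := by
  have hlen : (l.insertIdx p 1).length = l.length + 1 := List.length_insertIdx_of_le_length hp 1
  have ha' : a < (l.insertIdx p 1).length := by omega
  rcases lt_trichotomy a p with h | h | h
  · rw [if_pos h, List.getD_eq_getElem _ 0 ha',
      List.getElem_insertIdx_of_lt (l := l) (x := 1) h (by omega),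
      List.getD_eq_getElem l 0 (by omega)]
  · subst h; rw [if_neg (lt_irrefl _), if_pos rfl, List.getD_eq_getElem _ 0 ha']
    exact List.getElem_insertIdx_self (l := l) (x := 1) ha'
  · obtain ⟨k, rfl⟩ : ∃ k, a = p + k + 1 := ⟨a - p - 1, by omega⟩
    rw [if_neg (by omega), if_neg (by omega), List.getD_eq_getElem _ 0 ha',
      List.getElem_insertIdx_add_succ l 1 p k (by omega),
      List.getD_eq_getElem l 0 (by omega)]
    simp only [Nat.add_sub_cancel]

/-- zeros form exactly the first `l.count 0` entries, assuming no nonzero entry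
precedes a zero entry. -/
lemma count_char (l : List ℕ)
    (hpre : ∀ j k, j < k → k < l.length → l.getD j 0 ≠ 0 → l.getD k 0 ≠ 0) :
    ∀ k, k < l.length → (l.getD k 0 = 0 ↔ k < l.count 0) := by
  classical
  set p : ℕ → Bool := fun x => x == 0 with hp
  set t := l.takeWhile p with htdef
  set d := l.dropWhile p with hddef
  have htd : t ++ d = l := List.takeWhile_append_dropWhile (p := p) (l := l)
  have hlent : t.length + d.length = l.length := by
    rw [← htd, List.length_append]
  have hzero : ∀ k (hk : k < t.length), l.getD k 0 = 0 := by
    intro k hk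
    have h1 : t[k] = l[k]'(by omega) := (List.takeWhile_prefix p).getElem hk
    have h2 : t[k] ∈ t := List.getElem_mem hk
    have h3 : p t[k] = true := List.mem_takeWhile_imp h2
    rw [List.getD_eq_getElem l 0 (by omega), ← h1]
    simpa [hp] using h3
  have hnz : ∀ k, t.length ≤ k → k < l.length → l.getD k 0 ≠ 0 := by
    have hhead : t.length < l.length → l.getD t.length 0 ≠ 0 := by
      intro hlt
      have hd0 : 0 < d.length := by omega
      have := List.dropWhile_get_zero_not p l hd0
      have hig : l.getD t.length 0 = d[0] := by
        have h' : l[t.length]? = d[0]? := by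
          conv_lhs => rw [← htd]
          rw [List.getElem?_append_right (le_refl _)]
          simp
        rw [List.getD_eq_getElem?_getD, h', List.getElem?_eq_getElem hd0]
        rfl
      rw [hig]
      simpa [hp, List.get_eq_getElem] using this
    intro k hk hkl
    rcases eq_or_lt_of_le hk with rfl | hlt
    · exact hhead hkl
    · exact hpre t.length k hlt hkl (hhead (by omega))
  have hcount : l.count 0 = t.length := by
    have h1 : t.count 0 = t.length := by
      rw [List.count_eq_length]
      intro b hb
      have hb0 : b = 0 := by simpa [hp] using List.mem_takeWhile_imp hb
      exact hb0.symm
    have h2 : d.count 0 = 0 := by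
      rw [List.count_eq_zero]
      intro h0
      obtain ⟨i, hi, hdi⟩ := List.mem_iff_getElem.1 h0
      have : l.getD (t.length + i) 0 = d[i] := by
        have h' : l[(t.length + i)]? = d[i]? := by
          conv_lhs => rw [← htd]
          rw [List.getElem?_append_right (by omega)]
          congr 1
          omega
        rw [List.getD_eq_getElem?_getD, h', List.getElem?_eq_getElem hi]
        rfl
      exact hnz (t.length + i) (by omega) (by omega) (by rw [this, hdi])
    rw [← htd, List.count_append, h1, h2]
    omega
  intro k hk
  rw [hcount]
  constructor
  · intro h0
    by_contra hc
    exact hnz k (by omega) hk h0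
  · intro hlt
    exact hzero k hlt

lemma invD {l : List ℕ} (hinv : IsInvL l) : ∀ k, k < l.length → l.getD k 0 ≤ k := by
  intro k h
  rw [List.getD_eq_getElem l 0 h]
  exact hinv k h

lemma site_of (l : List ℕ) (z : ℕ) (hinv : IsInvL l) (h010 : ¬C010 l) (h102 : ¬C102 l)
    (h1 : ∀ x ∈ l, x ≠ 1) (hz2 : 2 ≤ z)
    (hchar : ∀ k, k < l.length → (l.getD k 0 = 0 ↔ k < z))
    (p : ℕ) (hzp : z ≤ p) (hpn : p ≤ l.length)
    (hsep : ∀ i k, i < p → p ≤ k → k < l.length → l.getD i 0 ≠ 0 →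
      ¬ l.getD i 0 < l.getD k 0) :
    IsSite l (p + 1) := by
  have hzn : z ≤ l.length := le_trans hzp hpn
  simp only [IsSite, Nat.add_sub_cancel]
  have hlen : (l.insertIdx p 1).length = l.length + 1 := List.length_insertIdx_of_le_length hpn 1
  set m := l.insertIdx p 1 with hm
  have hM : ∀ a, a < l.length + 1 →
      m.getD a 0 = if a < p then l.getD a 0 else if a = p then 1 else l.getD (a - 1) 0 :=
    fun a ha => getD_insertIdx_one l p hpn a ha
  have hMne : ∀ a, a < l.length + 1 → a ≠ p →
      m.getD a 0 = l.getD (if a < p then a else a - 1) 0 := by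
    intro a ha hap
    rw [hM a ha]
    by_cases h : a < p
    · simp [h]
    · simp [h, hap]
  have hidx : ∀ a, a < l.length + 1 → a ≠ p → (if a < p then a else a - 1) < l.length := by
    intro a ha hap
    by_cases h : a < p <;> simp [h] <;> omega
  have hMzero : ∀ a, a < l.length + 1 → a ≠ p → (m.getD a 0 = 0 ↔ a < z) := by
    intro a ha hap
    rw [hMne a ha hap]
    by_cases h : a < p
    · simp only [if_pos h]
      exact hchar a (by omega)
    · simp only [if_neg h]
      rw [hchar (a - 1) (by omega)]
      constructor <;> intro <;> omega
  have hMone : ∀ a, a < l.length + 1 → a ≠ p → m.getD a 0 ≠ 1 := by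
    intro a ha hap
    rw [hMne a ha hap]
    exact h1 _ (getD_mem' (hidx a ha hap))
  have hMp : m.getD p 0 = 1 := by rw [hM p (by omega)]; simp
  refine ⟨?_, ?_, ?_⟩
  · -- inversion sequence
    intro i h
    have hi : i < l.length + 1 := by omega
    have hgm : m.get ⟨i, h⟩ = m.getD i 0 := by
      rw [List.get_eq_getElem, List.getD_eq_getElem m 0 h]
    rw [hgm, hM i hi]
    split_ifs with h1' h2'
    · exact le_trans (invD hinv i (by omega)) (le_refl i)
    · omega
    · exact le_trans (invD hinv (i - 1) (by omega)) (by omega)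
  · -- no 010
    rintro ⟨i, j, k, hij, hjk, hk, he, hlt⟩
    rw [hlen] at hk
    by_cases hkz : m.getD k 0 = 0
    · have hkp : k ≠ p := by
        intro h
        rw [h, hMp] at hkz
        exact one_ne_zero hkz
      have hk_lt : k < z := (hMzero k (by omega) hkp).1 hkz
      have hjp : j ≠ p := by omega
      have hj0 : m.getD j 0 = 0 := (hMzero j (by omega) hjp).2 (by omega)
      omega
    by_cases hkp : k = p
    · have hip : i ≠ p := by omega
      have := hMone i (by omega) hip
      rw [he, hkp, hMp] at this
      exact this rfl
    · have hip : i ≠ p := by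
        intro h
        have := hMone k (by omega) hkp
        rw [← he, h, hMp] at this
        exact this rfl
      have hjp : j ≠ p := by
        intro h
        have hj1 : m.getD j 0 = 1 := by rw [h, hMp]
        omega
      refine h010 ⟨(if i < p then i else i - 1), (if j < p then j else j - 1),
        (if k < p then k else k - 1), ?_, ?_, ?_, ?_, ?_⟩
      · split_ifs <;> omega
      · split_ifs <;> omega
      · have := hidx k (by omega) hkp
        exact this
      · rw [← hMne i (by omega) hip, ← hMne k (by omega) hkp]
        exact he
      · rw [← hMne j (by omega) hjp, ← hMne k (by omega) hkp]
        exact hlt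
  · -- no 102
    rintro ⟨i, j, k, hij, hjk, hk, hji, hik⟩
    rw [hlen] at hk
    by_cases hip : i = p
    · have hj0 : m.getD j 0 = 0 := by
        rw [hip, hMp] at hji
        omega
      have hjp : j ≠ p := by omega
      have := (hMzero j (by omega) hjp).1 hj0
      omega
    · have hiv : m.getD i 0 ≠ 0 := by omega
      have hkp : k ≠ p := by
        intro h
        rw [h, hMp] at hik
        omega
      by_cases hjp : j = p
      · have hilt : i < p := by omega
        have hkgt : p < k := by omega
        have hmi : m.getD i 0 = l.getD i 0 := by
          rw [hMne i (by omega) hip, if_pos hilt]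
        have hmk : m.getD k 0 = l.getD (k - 1) 0 := by
          rw [hMne k (by omega) hkp, if_neg (by omega)]
        exact hsep i (k - 1) hilt (by omega) (by omega)
          (by rw [← hmi]; exact hiv) (by rw [← hmi, ← hmk]; exact hik)
      · refine h102 ⟨(if i < p then i else i - 1), (if j < p then j else j - 1),
          (if k < p then k else k - 1), ?_, ?_, ?_, ?_, ?_⟩
        · split_ifs <;> omega
        · split_ifs <;> omega
        · exact hidx k (by omega) hkp
        · rw [← hMne i (by omega) hip, ← hMne j (by omega) hjp]
          exact hji
        · rw [← hMne i (by omega) hip, ← hMne k (by omega) hkp]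
          exact hik

lemma c010_of_small (l : List ℕ) (z : ℕ) (hz2 : 2 ≤ z) (hzn : z ≤ l.length)
    (hchar : ∀ k, k < l.length → (l.getD k 0 = 0 ↔ k < z))
    (p : ℕ) (h1p : 1 ≤ p) (hpz : p < z) : C010 (l.insertIdx p 1) := by
  have hpn : p ≤ l.length := by omega
  have hlen : (l.insertIdx p 1).length = l.length + 1 := List.length_insertIdx_of_le_length hpn 1
  refine ⟨0, p, p + 1, h1p, by omega, by rw [hlen]; omega, ?_, ?_⟩
  · rw [getD_insertIdx_one l p hpn 0 (by omega), if_pos (by omega),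
      getD_insertIdx_one l p hpn (p + 1) (by omega), if_neg (by omega), if_neg (by omega)]
    simp only [Nat.add_sub_cancel]
    rw [(hchar 0 (by omega)).2 (by omega), (hchar p (by omega)).2 hpz]
  · rw [getD_insertIdx_one l p hpn (p + 1) (by omega), if_neg (by omega), if_neg (by omega),
      getD_insertIdx_one l p hpn p (by omega), if_neg (by omega), if_pos rfl]
    simp only [Nat.add_sub_cancel]
    rw [(hchar p (by omega)).2 hpz]
    omega

open Classical in
theorem bounds_nonconstant (l : List ℕ) (hinv : IsInvL l)
    (h010 : ¬ C010 l) (h102 : ¬ C102 l) (h1 : ∀ x ∈ l, x ≠ 1)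
    (hnc : ∃ a ∈ l, ∃ b ∈ l, a ≠ b) :
    3 ≤ l.length ∧
    2 ≤ l.count 0 ∧ l.count 0 ≤ l.length - 1 ∧
    2 ≤ ((Finset.Icc 2 (l.length + 1)).filter fun i => IsSite l i).card ∧
    ((Finset.Icc 2 (l.length + 1)).filter fun i => IsSite l i).card
      ≤ l.length - l.count 0 + 1 ∧
    IsSite l (l.count 0 + 1) ∧ IsSite l (l.length + 1) := by
  obtain ⟨a, ha, b, hb, hab⟩ := hnc
  have hinvD := invD hinv
  have hnz_ex : ∃ k, k < l.length ∧ l.getD k 0 ≠ 0 := by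
    have hx : ∃ x ∈ l, x ≠ 0 := by
      by_cases h : a = 0
      · exact ⟨b, hb, by rw [h] at hab; exact fun hb0 => hab hb0.symm⟩
      · exact ⟨a, ha, h⟩
    obtain ⟨x, hx, hx0⟩ := hx
    obtain ⟨k, hk, hlk⟩ := List.mem_iff_getElem.1 hx
    exact ⟨k, hk, by rw [List.getD_eq_getElem l 0 hk, hlk]; exact hx0⟩
  obtain ⟨w, hw, hw0⟩ := hnz_ex
  have hwval : 2 ≤ l.getD w 0 := by
    have h1' := h1 _ (getD_mem' hw)
    omega
  have hw2 : 2 ≤ w := le_trans hwval (hinvD w hw)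
  have hn3 : 3 ≤ l.length := by omega
  have hg0 : l.getD 0 0 = 0 := by have := hinvD 0 (by omega); omega
  have hg1 : l.getD 1 0 = 0 := by
    have hle := hinvD 1 (by omega)
    have hne := h1 _ (getD_mem' (show 1 < l.length by omega))
    omega
  have hpre : ∀ j k, j < k → k < l.length → l.getD j 0 ≠ 0 → l.getD k 0 ≠ 0 := by
    intro j k hjk hkl hj0 hk0
    have hjpos : 0 < j := by
      rcases Nat.eq_zero_or_pos j with rfl | h
      · exact absurd hg0 hj0
      · exact h
    exact h010 ⟨0, j, k, hjpos, hjk, hkl, by rw [hg0, hk0], by rw [hk0]; omega⟩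
  have hchar := count_char l hpre
  set z := l.count 0 with hzdef
  have hz2 : 2 ≤ z := by
    have := (hchar 1 (by omega)).1 hg1
    omega
  have hzn : z ≤ l.length - 1 := by
    have hwz : ¬ w < z := fun h => hw0 ((hchar w hw).2 h)
    omega
  have hsite_z : IsSite l (z + 1) := by
    apply site_of l z hinv h010 h102 h1 hz2 hchar z (le_refl z) (by omega)
    intro i k hi hk hkl hne
    exact fun _ => hne ((hchar i (by omega)).2 (by omega))
  have hsite_n : IsSite l (l.length + 1) := by
    apply site_of l z hinv h010 h102 h1 hz2 hchar l.length (by omega) (le_refl _)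
    intro i k hi hk hkl hne
    omega
  have hnot : ∀ i, 2 ≤ i → i ≤ z → ¬ IsSite l i := by
    intro i h2i hiz hsite
    exact hsite.2.1 (c010_of_small l z hz2 (by omega) hchar (i - 1) (by omega) (by omega))
  have hmemz : (z + 1) ∈ (Finset.Icc 2 (l.length + 1)).filter (fun i => IsSite l i) := by
    simp only [Finset.mem_filter, Finset.mem_Icc]
    exact ⟨⟨by omega, by omega⟩, hsite_z⟩
  have hmemn : (l.length + 1) ∈ (Finset.Icc 2 (l.length + 1)).filter (fun i => IsSite l i) := by
    simp only [Finset.mem_filter, Finset.mem_Icc]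
    exact ⟨⟨by omega, le_refl _⟩, hsite_n⟩
  refine ⟨hn3, hz2, hzn, ?_, ?_, hsite_z, hsite_n⟩
  · have hsub : ({z + 1, l.length + 1} : Finset ℕ) ⊆
        (Finset.Icc 2 (l.length + 1)).filter (fun i => IsSite l i) := by
      intro x hx
      rcases Finset.mem_insert.1 hx with rfl | hx
      · exact hmemz
      · rw [Finset.mem_singleton.1 hx]
        exact hmemn
    have hcard : ({z + 1, l.length + 1} : Finset ℕ).card = 2 := Finset.card_pair (by omega)
    calc 2 = ({z + 1, l.length + 1} : Finset ℕ).card := hcard.symm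
      _ ≤ _ := Finset.card_le_card hsub
  · have hsub : (Finset.Icc 2 (l.length + 1)).filter (fun i => IsSite l i) ⊆
        Finset.Icc (z + 1) (l.length + 1) := by
      intro x hx
      simp only [Finset.mem_filter, Finset.mem_Icc] at hx ⊢
      obtain ⟨⟨h2x, hxn⟩, hsx⟩ := hx
      refine ⟨?_, hxn⟩
      by_contra hc
      exact hnot x h2x (by omega) hsx
    have hle := Finset.card_le_card hsub
    rw [Nat.card_Icc] at hle
    omega
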